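/- Let (A, ·, 𝔅) be a quadratic perm algebra and r ∈ A ⊗ A with (R, ad)-invariant skew-symmetric part. Define P: A → A by P(a) = Tᵣ(𝔅♯(a)). Then r is a solution of the perm Yang-Baxter equation in (A, ·) if and only if P(a)·P(b) = P(P(a)·b + a·P(b) − a·T_{r−σ(r)}(𝔅♯(b))) for all a, b ∈ A. -/

import Mathlib

open TensorProduct

section
variable {K : Type*} [Field K] {A : Type*} [AddCommGroup A] [Module K A]

/-- perm identity for a plain binary operation -/
def IsPermFn {X : Type*} (mu : X → X → X) : Prop :=
  ∀ a b c : X, mu a (mu b c) = mu (mu a b) c ∧ mu (mu a b) c = mu (mu b a) c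

/-- perm algebra: bundled bilinear multiplication satisfying the perm identities -/
def IsPermMul (m : A →ₗ[K] A →ₗ[K] A) : Prop :=
  ∀ a b c : A, m a (m b c) = m (m a b) c ∧ m (m a b) c = m (m b a) c

/-- The map `T_r : A* → A` associated with a 2-tensor `r ∈ A ⊗ A`,
`T_r(a*) = Σ ⟨a*, a_i⟩ b_i` for `r = Σ a_i ⊗ b_i`. -/
noncomputable def Tten (r : A ⊗[K] A) : Module.Dual K A →ₗ[K] A :=
  TensorProduct.lift (LinearMap.mk₂ K
    (fun a b => (Module.Dual.eval K A a).smulRight b)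
    (by intro a a' b; ext f; simp [add_smul])
    (by intro c a b; ext f; simp [mul_smul])
    (by intro a b b'; ext f; simp [smul_add])
    (by intro c a b; ext f; simp [smul_comm c])) r

noncomputable def mulT (m : A →ₗ[K] A →ₗ[K] A) : A ⊗[K] A →ₗ[K] A := TensorProduct.lift m

noncomputable def p13_23 (m : A →ₗ[K] A →ₗ[K] A) :
    (A ⊗[K] A) ⊗[K] (A ⊗[K] A) →ₗ[K] (A ⊗[K] A) ⊗[K] A :=
  (TensorProduct.map LinearMap.id (mulT m)) ∘ₗ
    (TensorProduct.tensorTensorTensorComm K A A A A).toLinearMap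

noncomputable def p12_13 (m : A →ₗ[K] A →ₗ[K] A) :
    (A ⊗[K] A) ⊗[K] (A ⊗[K] A) →ₗ[K] (A ⊗[K] A) ⊗[K] A :=
  (TensorProduct.assoc K A A A).symm.toLinearMap ∘ₗ
    (TensorProduct.map (mulT m) LinearMap.id) ∘ₗ
    (TensorProduct.tensorTensorTensorComm K A A A A).toLinearMap

noncomputable def p13_12 (m : A →ₗ[K] A →ₗ[K] A) :
    (A ⊗[K] A) ⊗[K] (A ⊗[K] A) →ₗ[K] (A ⊗[K] A) ⊗[K] A :=
  (TensorProduct.assoc K A A A).symm.toLinearMap ∘ₗ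
    (TensorProduct.map (mulT m) (TensorProduct.comm K A A).toLinearMap) ∘ₗ
    (TensorProduct.tensorTensorTensorComm K A A A A).toLinearMap

noncomputable def p12_23 (m : A →ₗ[K] A →ₗ[K] A) :
    (A ⊗[K] A) ⊗[K] (A ⊗[K] A) →ₗ[K] (A ⊗[K] A) ⊗[K] A :=
  (TensorProduct.assoc K A A A).symm.toLinearMap ∘ₗ
    (TensorProduct.leftComm K A A A).toLinearMap ∘ₗ
    (TensorProduct.map (mulT m) LinearMap.id) ∘ₗ
    (TensorProduct.tensorTensorTensorComm K A A A A).toLinearMap ∘ₗ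
    (TensorProduct.map (TensorProduct.comm K A A).toLinearMap LinearMap.id)

/-- `[[r,r]] = r₁₂·r₂₃ − r₁₃·r₂₃ + r₁₂·r₁₃ − r₁₃·r₁₂` -/
noncomputable def ybrac (m : A →ₗ[K] A →ₗ[K] A) (r : A ⊗[K] A) : (A ⊗[K] A) ⊗[K] A :=
  p12_23 m (r ⊗ₜ r) - p13_23 m (r ⊗ₜ r) + p12_13 m (r ⊗ₜ r) - p13_12 m (r ⊗ₜ r)

/-- the perm Yang-Baxter equation -/
noncomputable def IsPYBESol (m : A →ₗ[K] A →ₗ[K] A) (r : A ⊗[K] A) : Prop := ybrac m r = 0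

/-- `(id ⊗ R(a) − ad(a) ⊗ id)(s) = 0` for all `a`. -/
def RadInv (m : A →ₗ[K] A →ₗ[K] A) (s : A ⊗[K] A) : Prop :=
  ∀ a : A, TensorProduct.map LinearMap.id (m.flip a) s
    = TensorProduct.map (m a - m.flip a) LinearMap.id s

variable {V : Type*} [AddCommGroup V] [Module K V]

/-- representation of a perm algebra -/
def IsPermRep (m : A →ₗ[K] A →ₗ[K] A) (l rr : A →ₗ[K] V →ₗ[K] V) : Prop :=
  ∀ a b : A, l (m a b) = l a ∘ₗ l b ∧ l a ∘ₗ l b = l b ∘ₗ l a ∧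
    rr (m a b) = rr b ∘ₗ rr a ∧ rr b ∘ₗ rr a = rr b ∘ₗ l a ∧ rr b ∘ₗ l a = l a ∘ₗ rr b

/-- A-perm algebra -/
def IsAPermAlg (m : A →ₗ[K] A →ₗ[K] A) (l rr : A →ₗ[K] V →ₗ[K] V)
    (mV : V →ₗ[K] V →ₗ[K] V) : Prop :=
  IsPermRep m l rr ∧ IsPermMul mV ∧
  (∀ (a : A) (u w : V), rr a (mV u w) = rr a (mV w u) ∧ rr a (mV u w) = mV u (rr a w)) ∧
  (∀ (a : A) (u w : V), mV (l a u) w = mV (rr a u) w ∧ mV (l a u) w = l a (mV u w) ∧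
    l a (mV u w) = mV u (l a w))



section YBAux
variable {K : Type*} [Field K] {A : Type*} [AddCommGroup A] [Module K A]

@[simp] lemma Tten_tmul (x y : A) (f : Module.Dual K A) :
    Tten (x ⊗ₜ[K] y) f = f x • y := by simp [Tten]
@[simp] lemma Tten_add (r s : A ⊗[K] A) : Tten (r + s) = Tten r + Tten s := by simp [Tten]
@[simp] lemma Tten_sub (r s : A ⊗[K] A) : Tten (r - s) = Tten r - Tten s := by simp [Tten]
@[simp] lemma Tten_zero : Tten (0 : A ⊗[K] A) = 0 := by simp [Tten]

/-- triple pairing against three linear functionals -/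
noncomputable def trip (f g h : Module.Dual K A) : (A ⊗[K] A) ⊗[K] A →ₗ[K] K :=
  (TensorProduct.lid K K).toLinearMap ∘ₗ
    TensorProduct.map ((TensorProduct.lid K K).toLinearMap ∘ₗ TensorProduct.map f g) h

@[simp] lemma trip_tmul (f g h : Module.Dual K A) (u v w : A) :
    trip f g h ((u ⊗ₜ[K] v) ⊗ₜ[K] w) = f u * g v * h w := by
  simp [trip, smul_eq_mul]

lemma trip_eq_zero_iff [FiniteDimensional K A] (t : (A ⊗[K] A) ⊗[K] A) :
    (∀ f g h : Module.Dual K A, trip f g h t = 0) ↔ t = 0 := by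
  constructor
  · intro H
    set b := Module.finBasis K A with hb
    have key : ∀ (t : (A ⊗[K] A) ⊗[K] A) (i j k : Fin (Module.finrank K A)),
        ((b.tensorProduct b).tensorProduct b).repr t ((i, j), k)
          = trip (b.coord i) (b.coord j) (b.coord k) t := by
      intro t i j k
      induction t using TensorProduct.induction_on with
      | zero => simp
      | tmul x w =>
        induction x using TensorProduct.induction_on with
        | zero => simp [zero_tmul]
        | tmul u v =>
          simp [Module.Basis.tensorProduct_repr_tmul_apply, Module.Basis.coord_apply, smul_eq_mul]
          ring
        | add x y hx hy => simp [add_tmul, hx, hy]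
      | add x y hx hy => simp [hx, hy]
    have : ((b.tensorProduct b).tensorProduct b).repr t = 0 := by
      ext ⟨⟨i, j⟩, k⟩
      rw [key t i j k, H]
      simp
    simpa using ((b.tensorProduct b).tensorProduct b).repr.map_eq_zero_iff.mp this
  · rintro rfl f g h; simp

variable (m : A →ₗ[K] A →ₗ[K] A)

@[simp] lemma p13_23_tmul (x y u v : A) :
    p13_23 m ((x ⊗ₜ[K] y) ⊗ₜ[K] (u ⊗ₜ[K] v)) = (x ⊗ₜ[K] u) ⊗ₜ[K] (m y v) := by
  simp [p13_23, mulT]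
@[simp] lemma p12_13_tmul (x y u v : A) :
    p12_13 m ((x ⊗ₜ[K] y) ⊗ₜ[K] (u ⊗ₜ[K] v)) = ((m x u) ⊗ₜ[K] y) ⊗ₜ[K] v := by
  simp [p12_13, mulT]
@[simp] lemma p13_12_tmul (x y u v : A) :
    p13_12 m ((x ⊗ₜ[K] y) ⊗ₜ[K] (u ⊗ₜ[K] v)) = ((m x u) ⊗ₜ[K] v) ⊗ₜ[K] y := by
  simp [p13_12, mulT]
@[simp] lemma p12_23_tmul (x y u v : A) :
    p12_23 m ((x ⊗ₜ[K] y) ⊗ₜ[K] (u ⊗ₜ[K] v)) = (x ⊗ₜ[K] (m y u)) ⊗ₜ[K] v := by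
  simp [p12_23, mulT]

section keylem
variable (B : A →ₗ[K] A →ₗ[K] K)
  (hskewB : ∀ a b : A, B a b = - B b a)
  (hinvB : ∀ a b c : A, B (m a b) c = B a (m b c - m c b))

include hskewB hinvB in
lemma lemA (y b u : A) : B b (m y u) = B (m y b) u := by
  rw [hskewB b (m y u), hinvB y u b, hinvB y b u]
  simp only [map_sub]
  ring

include hinvB in
lemma lemB (a x u : A) : B (m a x) u = B a (m x u) - B a (m u x) := by
  rw [hinvB a x u, map_sub]

include hskewB hinvB in
lemma keylem (a b c : A) (r r' : A ⊗[K] A) :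
    trip (B a) (B b) (B c) (p12_23 m (r ⊗ₜ r') - p13_23 m (r ⊗ₜ r')
        + p12_13 m (r ⊗ₜ r') - p13_12 m (r ⊗ₜ r'))
      = B c (Tten r' (B (m (Tten r (B a)) b))
          + Tten r' (B (m a (Tten ((TensorProduct.comm K A A) r) (B b))))
          - m (Tten r (B a)) (Tten r' (B b)))
        + trip (B a) (B b) (B c) (p13_12 m (r' ⊗ₜ r))
        - trip (B a) (B b) (B c) (p13_12 m (r ⊗ₜ r')) := by
  induction r using TensorProduct.induction_on with
  | zero => simp [zero_tmul, tmul_zero]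
  | add r1 r2 h1 h2 =>
    simp only [add_tmul, tmul_add, map_add, map_sub, Tten_add, LinearMap.add_apply] at *
    linear_combination h1 + h2
  | tmul x y =>
    induction r' using TensorProduct.induction_on with
    | zero => simp [zero_tmul, tmul_zero]
    | add s1 s2 h1 h2 =>
      simp only [add_tmul, tmul_add, map_add, map_sub, Tten_add, LinearMap.add_apply] at *
      linear_combination h1 + h2
    | tmul u v =>
      simp only [p12_23_tmul, p13_23_tmul, p12_13_tmul, p13_12_tmul, map_sub, map_add,
        trip_tmul, Tten_tmul, TensorProduct.comm_tmul, map_smul, LinearMap.smul_apply,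
        smul_eq_mul]
      have e1 := lemA m B hskewB hinvB y b u
      have e2 := lemB m B hinvB a x u
      linear_combination (B a x * B c v) * e1 - (B b y * B c v) * e2

include hskewB hinvB in
lemma keylem2 (a b c : A) (r : A ⊗[K] A) :
    trip (B a) (B b) (B c) (ybrac m r)
      = B c (Tten r (B (m (Tten r (B a)) b))
          + Tten r (B (m a (Tten ((TensorProduct.comm K A A) r) (B b))))
          - m (Tten r (B a)) (Tten r (B b))) := by
  have h := keylem m B hskewB hinvB a b c r r
  rw [ybrac]
  linear_combination h
end keylem
end YBAux

theorem stmt12 [FiniteDimensional K A] (m : A →ₗ[K] A →ₗ[K] A) (hm : IsPermMul m)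
    (B : A →ₗ[K] A →ₗ[K] K) (hB : Function.Bijective B)
    (hskewB : ∀ a b : A, B a b = - B b a)
    (hinvB : ∀ a b c : A, B (m a b) c = B a (m b c - m c b))
    (r : A ⊗[K] A) (hinv : RadInv m (r - (TensorProduct.comm K A A) r)) :
    IsPYBESol m r ↔
      ∀ a b : A,
        m (Tten r (B a)) (Tten r (B b))
          = Tten r (B (m (Tten r (B a)) b + m a (Tten r (B b))
              - m a (Tten (r - (TensorProduct.comm K A A) r) (B b)))) := by
  have nondeg : ∀ x : A, (∀ c : A, B c x = 0) → x = 0 := by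
    intro x hx
    have hBx : B x = 0 := by
      ext c
      rw [hskewB x c, hx c, neg_zero, LinearMap.zero_apply]
    have := hB.injective (a₁ := x) (a₂ := 0) (by rw [hBx, map_zero])
    exact this
  have harg : ∀ a b : A,
      m (Tten r (B a)) b + m a (Tten r (B b))
          - m a (Tten (r - (TensorProduct.comm K A A) r) (B b))
        = m (Tten r (B a)) b + m a (Tten ((TensorProduct.comm K A A) r) (B b)) := by
    intro a b
    rw [Tten_sub]
    simp only [LinearMap.sub_apply, map_sub]
    abel
  constructor
  · intro h a b
    rw [harg a b]
    have h0 : ∀ c : A,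
        B c (Tten r (B (m (Tten r (B a)) b + m a (Tten ((TensorProduct.comm K A A) r) (B b))))
            - m (Tten r (B a)) (Tten r (B b))) = 0 := by
      intro c
      have hk := keylem2 m B hskewB hinvB a b c r
      rw [h] at hk
      simp only [map_zero] at hk
      simp only [map_add, map_sub] at hk ⊢
      linear_combination -hk
    have := nondeg _ h0
    exact (sub_eq_zero.mp this).symm
  · intro h
    rw [IsPYBESol, ← trip_eq_zero_iff]
    intro f g h'
    obtain ⟨a, rfl⟩ := hB.surjective f
    obtain ⟨b, rfl⟩ := hB.surjective g
    obtain ⟨c, rfl⟩ := hB.surjective h'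
    rw [keylem2 m B hskewB hinvB a b c r]
    have he := h a b
    rw [harg a b] at he
    simp only [map_add] at he
    rw [he]
    simp


end
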